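/- Let K be a subfield of Q̄. Then span_ℚ G_K = {α ∈ G : τα = α in G for every τ ∈ Aut(Q̄/K)}; that is, the class of α ∈ Q̄^× in G lies in span_ℚ G_K if and only if for every τ ∈ Aut(Q̄/K) the quotient (τα)/α is a root of unity. -/

import Mathlib

set_option maxHeartbeats 1000000
set_option synthInstance.maxHeartbeats 400000


noncomputable section

/-- A fixed algebraic closure of `ℚ`. -/
abbrev Qbar : Type := AlgebraicClosure ℚ

/-- The primitive integer minimal polynomial of an algebraic number. -/
noncomputable def intMinpoly (α : Qbar) : Polynomial ℤ :=
  (IsLocalization.integerNormalization (nonZeroDivisors ℤ) (minpoly ℚ α)).primPart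

/-- The absolute logarithmic Weil height of an algebraic number, defined via the
(logarithmic) Mahler measure of its primitive integer minimal polynomial. -/
noncomputable def weilHeight (α : Qbar) : ℝ :=
  ((minpoly ℚ α).natDegree : ℝ)⁻¹ *
    (Real.log |((intMinpoly α).leadingCoeff : ℝ)| +
      (((intMinpoly α).map (Int.castRingHom ℂ)).roots.map
        (fun z => Real.log (max 1 ‖z‖))).sum)

/-- `σ` is an automorphism of `Q̄` fixing `K` pointwise, i.e. `σ ∈ Aut(Q̄/K)`. -/
def fixes (K : Subfield Qbar) (σ : Qbar ≃+* Qbar) : Prop := ∀ x ∈ K, σ x = x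

/-- The group `Q̄^×`. -/
abbrev Qx : Type := Qbarˣ

/-- `G = Q̄^× / Tor(Q̄^×)`. -/
abbrev GG : Type := Qx ⧸ CommGroup.torsion Qx

/-- The Weil height descends to `G`: since `h` is constant on cosets of the torsion
subgroup, the infimum below equals the common value of `h` at any representative. -/
noncomputable def hG (x : GG) : ℝ :=
  sInf {r : ℝ | ∃ u : Qx, (QuotientGroup.mk u : GG) = x ∧ r = weilHeight (u : Qbar)}

/-- The image `G_K` of `K^×` in `G`. -/
def GK (K : Subfield Qbar) : Set GG :=
  {x | ∃ u : Qx, (u : Qbar) ∈ K ∧ (QuotientGroup.mk u : GG) = x}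

/-- `span_ℚ G_K = { β ∈ G : β^m ∈ G_K for some nonzero integer m }`. -/
def spanGK (K : Subfield Qbar) : Set GG :=
  {x | ∃ m : ℤ, m ≠ 0 ∧ x ^ m ∈ GK K}

/-- The action of an automorphism of `Q̄` on `G = Q̄^×/Tor(Q̄^×)`. -/
def autG (σ : Qbar ≃+* Qbar) : GG →* GG :=
  QuotientGroup.map _ _ (Units.map (σ : Qbar →* Qbar))
    (fun u hu => by
      rw [Subgroup.mem_comap]
      rw [CommGroup.mem_torsion] at hu ⊢
      exact MonoidHom.isOfFinOrder _ hu)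

/-- The orbit of `x ∈ G` under the action of `Aut(Q̄/K)` on `G`. -/
def OrbG (K : Subfield Qbar) (x : GG) : Set GG :=
  {y | ∃ σ : Qbar ≃+* Qbar, fixes K σ ∧ y = autG σ x}

/-- `E_K = { α ∈ G : ∏_{β ∈ Orb_K(α)} β = 1 }`. -/
def EK (K : Subfield Qbar) : Set GG :=
  {x | (∏ᶠ y ∈ OrbG K x, y) = 1}

/-! ### Auxiliary material -/

instance (K : Subfield Qbar) : Algebra.IsAlgebraic K Qbar :=
  by haveI : Algebra.IsAlgebraic ℚ Qbar := AlgebraicClosure.isAlgebraic ℚ; exact Algebra.IsAlgebraic.tower_top (K := ℚ) K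

instance (K : Subfield Qbar) : IsAlgClosure K Qbar := ⟨inferInstance, inferInstance⟩

lemma fixes_of_algEquiv (K : Subfield Qbar) (σ : Qbar ≃ₐ[K] Qbar) :
    fixes K σ.toRingEquiv := fun k hk => σ.commutes ⟨k, hk⟩

/-- An automorphism fixing `K` pointwise, viewed as a `K`-algebra equivalence. -/
def toAlg (K : Subfield Qbar) (σ : Qbar ≃+* Qbar) (h : fixes K σ) : Qbar ≃ₐ[K] Qbar :=
  AlgEquiv.ofRingEquiv (f := σ) (fun k => h k k.2)

/-- An element of `Q̄` fixed by all automorphisms fixing `K` lies in `K`. -/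
lemma mem_of_fixed (K : Subfield Qbar) (x : Qbar)
    (hx : ∀ σ : Qbar ≃+* Qbar, fixes K σ → σ x = x) : x ∈ K := by
  by_contra hxK
  have hint : IsIntegral K x := Algebra.IsIntegral.isIntegral x
  have hsep : IsSeparable K x := (minpoly.irreducible hint).separable
  have hsp : ((minpoly K x).map (algebraMap K Qbar)).Splits := IsAlgClosed.splits _
  have hbot : x ∉ (⊥ : Subalgebra K Qbar) := by
    intro h
    obtain ⟨k, hk⟩ := Algebra.mem_bot.mp h
    exact hxK (hk ▸ k.2)
  obtain ⟨y, hne, hconj⟩ := (notMem_iff_exists_ne_and_isConjRoot hsep hsp).mp hbot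
  obtain ⟨σ, hσ⟩ := hconj.exists_algEquiv
  have h1 : σ.symm.toRingEquiv x = x := hx _ (fixes_of_algEquiv K σ.symm)
  have h2 : σ.symm x = y := by
    have := congrArg σ.symm hσ
    simpa using this.symm
  have h1' : σ.symm x = x := h1
  exact hne (h2.symm.trans h1').symm

lemma autG_mk (σ : Qbar ≃+* Qbar) (u : Qx) :
    autG σ (QuotientGroup.mk u) = QuotientGroup.mk (Units.map (σ : Qbar →* Qbar) u) := rfl

lemma val_map (σ : Qbar ≃+* Qbar) (u : Qx) :
    ((Units.map (σ : Qbar →* Qbar) u : Qx) : Qbar) = σ (u : Qbar) := rfl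

/-- Key fixed-point criterion on `G`. -/
lemma autG_fixed_iff (σ : Qbar ≃+* Qbar) (u : Qx) :
    autG σ (QuotientGroup.mk u) = QuotientGroup.mk u ↔
      IsOfFinOrder (Units.map (σ : Qbar →* Qbar) u / u) := by
  rw [autG_mk, QuotientGroup.eq]
  constructor
  · intro h
    have : (Units.map (σ : Qbar →* Qbar) u)⁻¹ * u ∈ CommGroup.torsion Qx := h
    have h2 : ((Units.map (σ : Qbar →* Qbar) u)⁻¹ * u)⁻¹ ∈ CommGroup.torsion Qx :=
      (CommGroup.torsion Qx).inv_mem this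
    have h3 : Units.map (σ : Qbar →* Qbar) u / u = ((Units.map (σ : Qbar →* Qbar) u)⁻¹ * u)⁻¹ := by
      rw [mul_inv_rev, inv_inv, div_eq_mul_inv, mul_comm]
    rw [CommGroup.mem_torsion] at h2
    rwa [h3]
  · intro h
    have h3 : (Units.map (σ : Qbar →* Qbar) u)⁻¹ * u = (Units.map (σ : Qbar →* Qbar) u / u)⁻¹ := by
      rw [div_eq_mul_inv, mul_inv_rev, inv_inv, mul_comm]
    show (Units.map (σ : Qbar →* Qbar) u)⁻¹ * u ∈ CommGroup.torsion Qx
    rw [h3]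
    exact (CommGroup.torsion Qx).inv_mem ((CommGroup.mem_torsion _).mpr h)

/-- Identity (3.13): `span_ℚ G_K` is the set of fixed points of the action of
`Aut(Q̄/K)` on `G`; equivalently, the class of `α ∈ Q̄^×` lies in `span_ℚ G_K` iff
`(τα)/α` is a root of unity for every `τ ∈ Aut(Q̄/K)`. -/
theorem stmt9 (K : Subfield Qbar) :
    spanGK K = {x : GG | ∀ σ : Qbar ≃+* Qbar, fixes K σ → autG σ x = x} ∧
    (∀ u : Qx, (QuotientGroup.mk u : GG) ∈ spanGK K ↔
      ∀ σ : Qbar ≃+* Qbar, fixes K σ →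
        ∃ n : ℕ, 0 < n ∧ (σ (u : Qbar) / (u : Qbar)) ^ n = 1) := by
  have tf : ∀ g : GG, g ≠ 1 → ¬IsOfFinOrder g := fun g hg => not_isOfFinOrder_of_isMulTorsionFree hg
  have main : spanGK K = {x : GG | ∀ σ : Qbar ≃+* Qbar, fixes K σ → autG σ x = x} := by
    ext x
    constructor
    · rintro ⟨m, hm, v, hvK, hv⟩ σ hσ
      -- autG σ fixes x^m
      have hfix : autG σ (x ^ m) = x ^ m := by
        rw [← hv, autG_mk]
        congr 1
        ext
        exact hσ _ hvK
      rw [map_zpow] at hfix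
      -- torsion-freeness
      by_contra hne
      set g : GG := autG σ x / x with hg
      have hgm : g ^ m = 1 := by
        rw [hg, div_zpow, hfix, div_self']
      have hg1 : g ≠ 1 := fun h => hne (by rwa [hg, div_eq_one] at h)
      have hfin : IsOfFinOrder g := by
        refine isOfFinOrder_iff_pow_eq_one.mpr ⟨m.natAbs, Int.natAbs_pos.mpr hm, ?_⟩
        have : g ^ (m.natAbs : ℤ) = 1 := by
          rcases Int.natAbs_eq m with h | h
          · rw [← h, hgm]
          · rw [show (m.natAbs : ℤ) = -m by omega, zpow_neg, hgm, inv_one]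
        rwa [zpow_natCast] at this
      exact tf g hg1 hfin
    · intro hx
      obtain ⟨u, rfl⟩ := QuotientGroup.mk_surjective x
      -- the set of "twists" is finite
      set T : Set Qbar := (minpoly K (u : Qbar)).rootSet Qbar with hT
      have hTfin : T.Finite := Set.toFinite _
      -- the set of twists σ(u)/u
      set S : Set Qx := {w | ∃ σ : Qbar ≃+* Qbar, fixes K σ ∧ w = Units.map (σ : Qbar →* Qbar) u / u}
        with hS
      set f : Qx → Qbar := fun w => (w : Qbar) * (u : Qbar) with hf
      have hfinj : Function.Injective f := by
        intro a b hab
        have : (a : Qbar) = (b : Qbar) := by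
          exact mul_right_cancel₀ (Units.ne_zero u) hab
        exact Units.ext this
      have hSsub : S ⊆ f ⁻¹' T := by
        rintro w ⟨σ, hσ, rfl⟩
        have hval : f (Units.map (σ : Qbar →* Qbar) u / u) = σ (u : Qbar) := by
          simp only [hf, Units.val_div_eq_div_val, val_map]
          field_simp
        show f _ ∈ T
        rw [hval, hT]
        rw [Polynomial.mem_rootSet]
        refine ⟨minpoly.ne_zero (Algebra.IsIntegral.isIntegral _), ?_⟩
        have := IsConjRoot.aeval_eq_zero (isConjRoot_of_algEquiv (u : Qbar) (toAlg K σ hσ))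
        exact this
      have hSfin : S.Finite := (hTfin.preimage hfinj.injOn).subset hSsub
      -- every element of S is torsion
      have hStor : ∀ w ∈ S, IsOfFinOrder w := by
        rintro w ⟨σ, hσ, rfl⟩
        exact (autG_fixed_iff σ u).mp (hx σ hσ)
      -- uniform exponent
      set N : ℕ := ∏ w ∈ hSfin.toFinset, orderOf w with hN
      have hNpos : 0 < N := by
        apply Finset.prod_pos
        intro w hw
        exact (hStor w (hSfin.mem_toFinset.mp hw)).orderOf_pos
      have hNkill : ∀ w ∈ S, w ^ N = 1 := by
        intro w hw
        apply orderOf_dvd_iff_pow_eq_one.mp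
        exact Finset.dvd_prod_of_mem _ (hSfin.mem_toFinset.mpr hw)
      -- u^N is fixed by all automorphisms fixing K
      have hmem : ((u ^ N : Qx) : Qbar) ∈ K := by
        apply mem_of_fixed
        intro σ hσ
        have hw : (Units.map (σ : Qbar →* Qbar) u / u) ^ N = 1 :=
          hNkill _ ⟨σ, hσ, rfl⟩
        have := congrArg (Units.val) hw
        simp only [Units.val_pow_eq_pow_val, Units.val_div_eq_div_val, val_map,
          Units.val_one, div_pow] at this
        have hu0 : (u : Qbar) ≠ 0 := Units.ne_zero u
        have : σ (u : Qbar) ^ N = (u : Qbar) ^ N := by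
          field_simp at this
          linear_combination this
        calc σ ((u ^ N : Qx) : Qbar) = σ ((u : Qbar) ^ N) := by push_cast; ring_nf
          _ = σ (u : Qbar) ^ N := map_pow σ _ _
          _ = (u : Qbar) ^ N := this
          _ = ((u ^ N : Qx) : Qbar) := by push_cast; ring_nf
      refine ⟨(N : ℤ), by exact_mod_cast hNpos.ne', u ^ N, hmem, ?_⟩
      rw [zpow_natCast]
      rfl
  refine ⟨main, fun u => ?_⟩
  rw [main]
  simp only [Set.mem_setOf_eq]
  constructor
  · intro h σ hσ
    have := (autG_fixed_iff σ u).mp (h σ hσ)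
    obtain ⟨n, hn, hpow⟩ := isOfFinOrder_iff_pow_eq_one.mp this
    refine ⟨n, hn, ?_⟩
    have := congrArg (Units.val) hpow
    simpa [div_pow] using this
  · intro h σ hσ
    obtain ⟨n, hn, hpow⟩ := h σ hσ
    refine (autG_fixed_iff σ u).mpr (isOfFinOrder_iff_pow_eq_one.mpr ⟨n, hn, ?_⟩)
    ext
    push_cast
    simpa [val_map, div_pow] using hpow

end
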